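/- Let X be an N-way real tensor of size I_1 × ⋯ × I_N, let σ : {1,…,N} → {1,…,K} be a cell map with cell dimensions Ĩ_1,…,Ĩ_K satisfying I_n = Ĩ_{σ(n)}, let λ ∈ ℝ^r and A_k ∈ ℝ^{Ĩ_k × r} for k ∈ {1,…,K}, and let M be the symmetric Kruskal tensor with entries m_i = ∑_{j=1}^r λ_j ∏_{n=1}^N (A_{σ(n)})_{i_n, j}. Let ℓ : ℝ × ℝ → ℝ be such that for every x ∈ ℝ the map m ↦ ℓ(x, m) is differentiable on ℝ with derivative ∂ℓ/∂m(x, m), and define F(λ, A_1,…,A_K) = ∑_i ℓ(x_i, m_i). Then for every k ∈ {1,…,K}, every a ∈ {1,…,Ĩ_k}, and every b ∈ {1,…,r}, the partial derivative of F with respect to the (a,b) entry of A_k exists at (λ, A_1,…,A_K) and equals ∑_{t : σ(t) = k} ∑_{i : i_t = a} y_i · λ_b · ∏_{n ≠ t} (A_{σ(n)})_{i_n, b}, where y_i = ∂ℓ/∂m(x_i, m_i) and the inner sum runs over all multi-indices i whose t-th coordinate equals a. -/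

import Mathlib

open Finset

/-- **SymGCP gradient with respect to a factor matrix entry.**
For the SymGCP objective `F = ∑_i ℓ(x_i, m_i)` with the symmetric Kruskal model
`m_i = ∑_j λ_j ∏_n (A_{σ(n)})_{i_n, j}`, for every cell `k`, row `a` and column `b`,
the partial derivative with respect to the `(a,b)` entry of `A_k` exists and equals
`∑_{t : σ(t) = k} ∑_{i : i_t = a} y_i · λ_b · ∏_{n ≠ t} (A_{σ(n)})_{i_n, b}`
where `y_i = ∂ℓ/∂m (x_i, m_i)`. -/
theorem symgcp_gradient_factor
    (N K r : ℕ) (σ : Fin N → Fin K) (Itil : Fin K → ℕ)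
    (X : ((n : Fin N) → Fin (Itil (σ n))) → ℝ)
    (lam : Fin r → ℝ) (A : (k : Fin K) → Fin (Itil k) → Fin r → ℝ)
    (ℓ : ℝ → ℝ → ℝ) (dℓ : ℝ → ℝ → ℝ)
    (hℓ : ∀ x m : ℝ, HasDerivAt (fun z => ℓ x z) (dℓ x m) m)
    (k : Fin K) (a : Fin (Itil k)) (b : Fin r) :
    HasDerivAt
      (fun t : ℝ => ∑ i : (n : Fin N) → Fin (Itil (σ n)),
        ℓ (X i) (∑ j : Fin r, lam j *
          ∏ n : Fin N,
            (Function.update A k (fun a' b' => if a' = a ∧ b' = b then t else A k a' b'))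
              (σ n) (i n) j))
      (∑ t ∈ Finset.univ.filter (fun t : Fin N => σ t = k),
        ∑ i ∈ Finset.univ.filter
            (fun i : (n : Fin N) → Fin (Itil (σ n)) => ((i t : ℕ) = (a : ℕ))),
          dℓ (X i) (∑ j : Fin r, lam j * ∏ n : Fin N, A (σ n) (i n) j) *
            (lam b * ∏ n ∈ Finset.univ.erase t, A (σ n) (i n) b))
      (A k a b) := by
  -- rewrite the update into an explicit if-then-else
  have hP : ∀ (t : ℝ) (n : Fin N) (i : (n : Fin N) → Fin (Itil (σ n))) (j : Fin r),
      Function.update A k (fun a' b' => if a' = a ∧ b' = b then t else A k a' b') (σ n) (i n) j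
        = if σ n = k ∧ ((i n : ℕ) = (a : ℕ)) ∧ j = b then t else A (σ n) (i n) j := by
    intro t n i j
    by_cases h : σ n = k
    · subst h
      rw [Function.update_self]
      simp [Fin.ext_iff]
    · rw [Function.update_of_ne h]
      simp [h]
  have hF0 : ∀ (i : (n : Fin N) → Fin (Itil (σ n))) (n : Fin N) (j : Fin r),
      (if σ n = k ∧ ((i n : ℕ) = (a : ℕ)) ∧ j = b then A k a b else A (σ n) (i n) j)
        = A (σ n) (i n) j := by
    intro i n j
    split_ifs with h
    · obtain ⟨h1, h2, h3⟩ := h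
      subst h3; subst h1
      have : i n = a := Fin.ext h2
      rw [this]
    · rfl
  -- per-index derivative of the model entry
  have key : ∀ i : (n : Fin N) → Fin (Itil (σ n)),
      HasDerivAt (fun t : ℝ => ∑ j : Fin r, lam j *
          ∏ n : Fin N, if σ n = k ∧ ((i n : ℕ) = (a : ℕ)) ∧ j = b then t else A (σ n) (i n) j)
        (lam b * ∑ n ∈ Finset.univ.filter (fun n => σ n = k ∧ ((i n : ℕ) = (a : ℕ))),
          ∏ p ∈ Finset.univ.erase n, A (σ p) (i p) b)
        (A k a b) := by
    intro i
    have hj : ∀ j : Fin r,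
        HasDerivAt (fun t : ℝ =>
            lam j * ∏ n : Fin N,
              if σ n = k ∧ ((i n : ℕ) = (a : ℕ)) ∧ j = b then t else A (σ n) (i n) j)
          (lam j * ∑ n ∈ Finset.univ.filter
              (fun n => σ n = k ∧ ((i n : ℕ) = (a : ℕ)) ∧ j = b),
            ∏ p ∈ Finset.univ.erase n, A (σ p) (i p) j)
          (A k a b) := by
      intro j
      have hfac : ∀ n : Fin N,
          HasDerivAt (fun t : ℝ =>
              if σ n = k ∧ ((i n : ℕ) = (a : ℕ)) ∧ j = b then t else A (σ n) (i n) j)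
            (if σ n = k ∧ ((i n : ℕ) = (a : ℕ)) ∧ j = b then (1 : ℝ) else 0)
            (A k a b) := by
        intro n
        by_cases h : σ n = k ∧ ((i n : ℕ) = (a : ℕ)) ∧ j = b
        · simp only [if_pos h]
          exact hasDerivAt_id _
        · simp only [if_neg h]
          exact hasDerivAt_const _ _
      have hprod := HasDerivAt.fun_finsetProd (u := Finset.univ)
        (f := fun n t => if σ n = k ∧ ((i n : ℕ) = (a : ℕ)) ∧ j = b then t else A (σ n) (i n) j)
        (f' := fun n => if σ n = k ∧ ((i n : ℕ) = (a : ℕ)) ∧ j = b then (1 : ℝ) else 0)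
        (fun n _ => hfac n)
      have heq : (∑ n : Fin N, (∏ p ∈ Finset.univ.erase n,
            if σ p = k ∧ ((i p : ℕ) = (a : ℕ)) ∧ j = b then A k a b else A (σ p) (i p) j) •
            (if σ n = k ∧ ((i n : ℕ) = (a : ℕ)) ∧ j = b then (1 : ℝ) else 0))
          = ∑ n ∈ Finset.univ.filter
              (fun n => σ n = k ∧ ((i n : ℕ) = (a : ℕ)) ∧ j = b),
            ∏ p ∈ Finset.univ.erase n, A (σ p) (i p) j := by
        simp only [smul_eq_mul, hF0 i]
        rw [Finset.sum_filter]
        refine Finset.sum_congr rfl fun n _ => ?_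
        by_cases h : σ n = k ∧ ((i n : ℕ) = (a : ℕ)) ∧ j = b <;>
          simp [h]
      rw [heq] at hprod
      exact hprod.const_mul (lam j)
    have hsum := HasDerivAt.fun_sum (u := Finset.univ) fun j _ => hj j
    have heq2 : (∑ j : Fin r, lam j * ∑ n ∈ Finset.univ.filter
            (fun n => σ n = k ∧ ((i n : ℕ) = (a : ℕ)) ∧ j = b),
          ∏ p ∈ Finset.univ.erase n, A (σ p) (i p) j)
        = lam b * ∑ n ∈ Finset.univ.filter (fun n => σ n = k ∧ ((i n : ℕ) = (a : ℕ))),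
          ∏ p ∈ Finset.univ.erase n, A (σ p) (i p) b := by
      rw [Finset.sum_eq_single b]
      · simp
      · intro j _ hjb
        simp [hjb]
      · intro h
        exact absurd (Finset.mem_univ b) h
    rw [heq2] at hsum
    exact hsum
  -- chain rule per index
  have hcomp : ∀ i : (n : Fin N) → Fin (Itil (σ n)),
      HasDerivAt (fun t : ℝ => ℓ (X i) (∑ j : Fin r, lam j *
          ∏ n : Fin N, if σ n = k ∧ ((i n : ℕ) = (a : ℕ)) ∧ j = b then t else A (σ n) (i n) j))
        (dℓ (X i) (∑ j : Fin r, lam j * ∏ n : Fin N, A (σ n) (i n) j) *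
          (lam b * ∑ n ∈ Finset.univ.filter (fun n => σ n = k ∧ ((i n : ℕ) = (a : ℕ))),
            ∏ p ∈ Finset.univ.erase n, A (σ p) (i p) b))
        (A k a b) := by
    intro i
    have hval : (∑ j : Fin r, lam j *
          ∏ n : Fin N, if σ n = k ∧ ((i n : ℕ) = (a : ℕ)) ∧ j = b
            then A k a b else A (σ n) (i n) j)
        = ∑ j : Fin r, lam j * ∏ n : Fin N, A (σ n) (i n) j := by
      refine Finset.sum_congr rfl fun j _ => ?_
      congr 1
      exact Finset.prod_congr rfl fun n _ => hF0 i n j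
    have H := (hℓ (X i) (∑ j : Fin r, lam j *
        ∏ n : Fin N, if σ n = k ∧ ((i n : ℕ) = (a : ℕ)) ∧ j = b
          then A k a b else A (σ n) (i n) j)).comp (A k a b) (key i)
    rw [hval] at H
    exact H
  have main := HasDerivAt.fun_sum (u := Finset.univ) fun i _ => hcomp i
  -- identify the function
  have hfun : (fun t : ℝ => ∑ i : (n : Fin N) → Fin (Itil (σ n)),
        ℓ (X i) (∑ j : Fin r, lam j *
          ∏ n : Fin N,
            (Function.update A k (fun a' b' => if a' = a ∧ b' = b then t else A k a' b'))
              (σ n) (i n) j))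
      = (fun t : ℝ => ∑ i : (n : Fin N) → Fin (Itil (σ n)),
        ℓ (X i) (∑ j : Fin r, lam j *
          ∏ n : Fin N, if σ n = k ∧ ((i n : ℕ) = (a : ℕ)) ∧ j = b
            then t else A (σ n) (i n) j)) := by
    funext t
    refine Finset.sum_congr rfl fun i _ => ?_
    congr 1
    refine Finset.sum_congr rfl fun j _ => ?_
    congr 1
    exact Finset.prod_congr rfl fun n _ => hP t n i j
  -- identify the derivative value
  have hderiv : (∑ t ∈ Finset.univ.filter (fun t : Fin N => σ t = k),
        ∑ i ∈ Finset.univ.filter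
            (fun i : (n : Fin N) → Fin (Itil (σ n)) => ((i t : ℕ) = (a : ℕ))),
          dℓ (X i) (∑ j : Fin r, lam j * ∏ n : Fin N, A (σ n) (i n) j) *
            (lam b * ∏ n ∈ Finset.univ.erase t, A (σ n) (i n) b))
      = ∑ i : (n : Fin N) → Fin (Itil (σ n)),
          dℓ (X i) (∑ j : Fin r, lam j * ∏ n : Fin N, A (σ n) (i n) j) *
            (lam b * ∑ n ∈ Finset.univ.filter (fun n => σ n = k ∧ ((i n : ℕ) = (a : ℕ))),
              ∏ p ∈ Finset.univ.erase n, A (σ p) (i p) b) := by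
    simp only [Finset.sum_filter, Finset.mul_sum, mul_ite, mul_zero]
    rw [Finset.sum_comm]
    refine Finset.sum_congr rfl fun t _ => ?_
    by_cases h : σ t = k <;> simp [h]
  rw [hfun, hderiv]
  exact main
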